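/- Assume c ≠ 0. If ω₀ > 0, τ₀ ≥ 0 satisfy P(iω₀) = 0 (with delay τ = τ₀) and h′(ω₀²) ≠ 0, then ∂P/∂λ evaluated at λ = iω₀ is nonzero; in particular iω₀ is a simple root of the characteristic function P. -/

import Mathlib

noncomputable section

/-- Coefficient A = b₁+b₂−2a -/
def cA (a b₁ b₂ : ℝ) : ℝ := b₁ + b₂ - 2*a
/-- Coefficient B = b₁b₂−2a(b₁+b₂)+a²+2 -/
def cB (a b₁ b₂ : ℝ) : ℝ := b₁*b₂ - 2*a*(b₁+b₂) + a^2 + 2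
/-- Coefficient C = (a²+1)(b₁+b₂)−2ab₁b₂−2a -/
def cC (a b₁ b₂ : ℝ) : ℝ := (a^2+1)*(b₁+b₂) - 2*a*b₁*b₂ - 2*a
/-- Coefficient D = a²b₁b₂−a(b₁+b₂)+1 -/
def cD (a b₁ b₂ : ℝ) : ℝ := a^2*b₁*b₂ - a*(b₁+b₂) + 1
/-- Coefficient E = c² -/
def cE (c : ℝ) : ℝ := c^2
/-- P̂ = A²−2B -/
def qP (a b₁ b₂ c : ℝ) : ℝ := (cA a b₁ b₂)^2 - 2*(cB a b₁ b₂)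
/-- Q̂ = B²+2D−2AC−E² -/
def qQ (a b₁ b₂ c : ℝ) : ℝ :=
  (cB a b₁ b₂)^2 + 2*(cD a b₁ b₂) - 2*(cA a b₁ b₂)*(cC a b₁ b₂) - (cE c)^2
/-- R̂ = C²−2BD−E²(b₁²+b₂²) -/
def qR (a b₁ b₂ c : ℝ) : ℝ :=
  (cC a b₁ b₂)^2 - 2*(cB a b₁ b₂)*(cD a b₁ b₂) - (cE c)^2*(b₁^2+b₂^2)
/-- Ŝ = D²−E²(b₁b₂)² -/
def qS (a b₁ b₂ c : ℝ) : ℝ := (cD a b₁ b₂)^2 - (cE c)^2*(b₁*b₂)^2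
/-- Auxiliary quartic h(z) = z⁴+P̂z³+Q̂z²+R̂z+Ŝ -/
def hq (a b₁ b₂ c z : ℝ) : ℝ :=
  z^4 + qP a b₁ b₂ c * z^3 + qQ a b₁ b₂ c * z^2 + qR a b₁ b₂ c * z + qS a b₁ b₂ c
/-- Derivative h′(z) = 4z³+3P̂z²+2Q̂z+R̂ -/
def hq' (a b₁ b₂ c z : ℝ) : ℝ :=
  4*z^3 + 3*qP a b₁ b₂ c * z^2 + 2*qQ a b₁ b₂ c * z + qR a b₁ b₂ c
/-- Characteristic function P(λ) = λ⁴+Aλ³+Bλ²+Cλ+D − E(λ+b₁)(λ+b₂)e^{−2λτ} -/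
def charP (a b₁ b₂ c τ : ℝ) (z : ℂ) : ℂ :=
  z^4 + (cA a b₁ b₂ : ℂ)*z^3 + (cB a b₁ b₂ : ℂ)*z^2 + (cC a b₁ b₂ : ℂ)*z + (cD a b₁ b₂ : ℂ)
    - (cE c : ℂ) * (z + (b₁:ℂ)) * (z + (b₂:ℂ)) * Complex.exp (-(2*z*(τ:ℂ)))

theorem stmt_10 (a b₁ b₂ c : ℝ) (ha : 0 < a) (hb₁ : 0 < b₁) (hb₂ : 0 < b₂)
    (hc : c ≠ 0) (ω₀ τ₀ : ℝ) (hω₀ : 0 < ω₀) (hτ₀ : 0 ≤ τ₀)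
    (hroot : charP a b₁ b₂ c τ₀ (Complex.I * (ω₀:ℂ)) = 0)
    (hder : hq' a b₁ b₂ c (ω₀^2) ≠ 0) :
    deriv (charP a b₁ b₂ c τ₀) (Complex.I * (ω₀:ℂ)) ≠ 0 := by
  intro h0
  set z : ℂ := Complex.I * (ω₀:ℂ) with hzdef
  -- the derivative of charP
  have hexp : HasDerivAt (fun y : ℂ => Complex.exp (-(2*y*(τ₀:ℂ))))
      (Complex.exp (-(2*z*(τ₀:ℂ))) * (-(2*(τ₀:ℂ)))) z := by
    have h := ((hasDerivAt_id z).const_mul (-(2*(τ₀:ℂ)))).cexp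
    have he : (fun y : ℂ => Complex.exp (-(2*(τ₀:ℂ)) * id y)) =
        fun y : ℂ => Complex.exp (-(2*y*(τ₀:ℂ))) := by
      funext y; congr 1; simp [id]; ring
    rw [he] at h
    exact h.congr_deriv (by simp only [id, mul_one]; ring_nf)
  have hprod : HasDerivAt
      (fun y : ℂ => (cE c:ℂ) * (y + (b₁:ℂ)) * (y + (b₂:ℂ)) * Complex.exp (-(2*y*(τ₀:ℂ))))
      (((cE c:ℂ) * 1 * (z + (b₂:ℂ)) + (cE c:ℂ) * (z + (b₁:ℂ)) * 1) * Complex.exp (-(2*z*(τ₀:ℂ)))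
        + (cE c:ℂ) * (z + (b₁:ℂ)) * (z + (b₂:ℂ)) * (Complex.exp (-(2*z*(τ₀:ℂ))) * (-(2*(τ₀:ℂ))))) z := by
    exact ((((hasDerivAt_id z).add_const (b₁:ℂ)).const_mul ((cE c:ℂ))).mul
      ((hasDerivAt_id z).add_const (b₂:ℂ))).mul hexp
  have hpoly : HasDerivAt
      (fun y : ℂ => y^4 + (cA a b₁ b₂:ℂ)*y^3 + (cB a b₁ b₂:ℂ)*y^2 + (cC a b₁ b₂:ℂ)*y + (cD a b₁ b₂:ℂ))
      ((4:ℕ)*z^(4-1) + (cA a b₁ b₂:ℂ)*((3:ℕ)*z^(3-1)) + (cB a b₁ b₂:ℂ)*((2:ℕ)*z^(2-1))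
        + (cC a b₁ b₂:ℂ)*1) z := by
    exact ((((hasDerivAt_pow 4 z).add ((hasDerivAt_pow 3 z).const_mul _)).add
      ((hasDerivAt_pow 2 z).const_mul _)).add ((hasDerivAt_id' z).const_mul _)).add_const _
  have htot := hpoly.sub hprod
  have hD : deriv (charP a b₁ b₂ c τ₀) z = _ := HasDerivAt.deriv htot
  rw [hD] at h0
  simp only [charP] at hroot
  -- canonical forms
  have eq2 : 4*z^3 + 3*(cA a b₁ b₂:ℂ)*z^2 + 2*(cB a b₁ b₂:ℂ)*z + (cC a b₁ b₂:ℂ)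
      - (cE c:ℂ) * ((2*z + (b₁:ℂ) + (b₂:ℂ)) - 2*(τ₀:ℂ)*((z + (b₁:ℂ))*(z + (b₂:ℂ))))
        * Complex.exp (-(2*z*(τ₀:ℂ))) = 0 := by
    push_cast at h0 ⊢
    linear_combination h0
  -- conjugation facts
  have hcz : (starRingEnd ℂ) z = -z := by
    rw [hzdef, map_mul, Complex.conj_I, Complex.conj_ofReal]; ring
  have hce1 : (starRingEnd ℂ) (Complex.exp (-(2*z*(τ₀:ℂ)))) = Complex.exp (2*z*(τ₀:ℂ)) := by
    rw [← Complex.exp_conj]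
    congr 1
    simp only [map_neg, map_mul, hcz, Complex.conj_ofReal, map_ofNat]
    ring
  have hee : Complex.exp (-(2*z*(τ₀:ℂ))) * Complex.exp (2*z*(τ₀:ℂ)) = 1 := by
    rw [← Complex.exp_add, show -(2*z*(τ₀:ℂ)) + 2*z*(τ₀:ℂ) = 0 by ring, Complex.exp_zero]
  -- conjugated equations
  have eq1c : (-z)^4 + (cA a b₁ b₂:ℂ)*(-z)^3 + (cB a b₁ b₂:ℂ)*(-z)^2 + (cC a b₁ b₂:ℂ)*(-z)
      + (cD a b₁ b₂:ℂ) - (cE c:ℂ) * ((-z) + (b₁:ℂ)) * ((-z) + (b₂:ℂ))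
        * Complex.exp (2*z*(τ₀:ℂ)) = 0 := by
    have h := congrArg (starRingEnd ℂ) hroot
    simp only [map_sub, map_add, map_mul, map_pow, map_zero, map_one, map_ofNat,
      Complex.conj_ofReal, hcz, hce1] at h
    linear_combination h
  have eq2c : 4*(-z)^3 + 3*(cA a b₁ b₂:ℂ)*(-z)^2 + 2*(cB a b₁ b₂:ℂ)*(-z) + (cC a b₁ b₂:ℂ)
      - (cE c:ℂ) * ((2*(-z) + (b₁:ℂ) + (b₂:ℂ)) - 2*(τ₀:ℂ)*(((-z) + (b₁:ℂ))*((-z) + (b₂:ℂ))))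
        * Complex.exp (2*z*(τ₀:ℂ)) = 0 := by
    have h := congrArg (starRingEnd ℂ) eq2
    simp only [map_sub, map_add, map_mul, map_pow, map_zero, map_one, map_ofNat,
      Complex.conj_ofReal, hcz, hce1] at h
    linear_combination h
  -- eliminate the exponentials
  have hii : (4*z^3 + 3*(cA a b₁ b₂:ℂ)*z^2 + 2*(cB a b₁ b₂:ℂ)*z + (cC a b₁ b₂:ℂ))
      * ((z + (b₁:ℂ))*(z + (b₂:ℂ)))
      = (z^4 + (cA a b₁ b₂:ℂ)*z^3 + (cB a b₁ b₂:ℂ)*z^2 + (cC a b₁ b₂:ℂ)*z + (cD a b₁ b₂:ℂ))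
        * ((2*z + (b₁:ℂ) + (b₂:ℂ)) - 2*(τ₀:ℂ)*((z + (b₁:ℂ))*(z + (b₂:ℂ)))) := by
    linear_combination ((z + (b₁:ℂ))*(z + (b₂:ℂ))) * eq2
      - ((2*z + (b₁:ℂ) + (b₂:ℂ)) - 2*(τ₀:ℂ)*((z + (b₁:ℂ))*(z + (b₂:ℂ)))) * hroot
  have hiii : (4*(-z)^3 + 3*(cA a b₁ b₂:ℂ)*(-z)^2 + 2*(cB a b₁ b₂:ℂ)*(-z) + (cC a b₁ b₂:ℂ))
      * (((-z) + (b₁:ℂ))*((-z) + (b₂:ℂ)))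
      = ((-z)^4 + (cA a b₁ b₂:ℂ)*(-z)^3 + (cB a b₁ b₂:ℂ)*(-z)^2 + (cC a b₁ b₂:ℂ)*(-z) + (cD a b₁ b₂:ℂ))
        * ((2*(-z) + (b₁:ℂ) + (b₂:ℂ)) - 2*(τ₀:ℂ)*(((-z) + (b₁:ℂ))*((-z) + (b₂:ℂ)))) := by
    linear_combination (((-z) + (b₁:ℂ))*((-z) + (b₂:ℂ))) * eq2c
      - ((2*(-z) + (b₁:ℂ) + (b₂:ℂ)) - 2*(τ₀:ℂ)*(((-z) + (b₁:ℂ))*((-z) + (b₂:ℂ)))) * eq1c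
  have hiQ : (z^4 + (cA a b₁ b₂:ℂ)*z^3 + (cB a b₁ b₂:ℂ)*z^2 + (cC a b₁ b₂:ℂ)*z + (cD a b₁ b₂:ℂ))
      * ((-z)^4 + (cA a b₁ b₂:ℂ)*(-z)^3 + (cB a b₁ b₂:ℂ)*(-z)^2 + (cC a b₁ b₂:ℂ)*(-z) + (cD a b₁ b₂:ℂ))
      = (cE c:ℂ)^2 * ((z + (b₁:ℂ))*(z + (b₂:ℂ))) * (((-z) + (b₁:ℂ))*((-z) + (b₂:ℂ))) := by
    linear_combination ((-z)^4 + (cA a b₁ b₂:ℂ)*(-z)^3 + (cB a b₁ b₂:ℂ)*(-z)^2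
        + (cC a b₁ b₂:ℂ)*(-z) + (cD a b₁ b₂:ℂ)) * hroot
      + (cE c:ℂ)*((z + (b₁:ℂ))*(z + (b₂:ℂ)))*Complex.exp (-(2*z*(τ₀:ℂ))) * eq1c
      + (cE c:ℂ)^2*((z + (b₁:ℂ))*(z + (b₂:ℂ)))*(((-z) + (b₁:ℂ))*((-z) + (b₂:ℂ))) * hee
  -- S * (Pz*Pw) = 0
  have hSP : ((4*z^3 + 3*(cA a b₁ b₂:ℂ)*z^2 + 2*(cB a b₁ b₂:ℂ)*z + (cC a b₁ b₂:ℂ))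
        * ((-z)^4 + (cA a b₁ b₂:ℂ)*(-z)^3 + (cB a b₁ b₂:ℂ)*(-z)^2 + (cC a b₁ b₂:ℂ)*(-z) + (cD a b₁ b₂:ℂ))
      - (z^4 + (cA a b₁ b₂:ℂ)*z^3 + (cB a b₁ b₂:ℂ)*z^2 + (cC a b₁ b₂:ℂ)*z + (cD a b₁ b₂:ℂ))
        * (4*(-z)^3 + 3*(cA a b₁ b₂:ℂ)*(-z)^2 + 2*(cB a b₁ b₂:ℂ)*(-z) + (cC a b₁ b₂:ℂ))
      - (cE c:ℂ)^2 * ((2*z + (b₁:ℂ) + (b₂:ℂ)) * (((-z) + (b₁:ℂ))*((-z) + (b₂:ℂ)))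
          - (2*(-z) + (b₁:ℂ) + (b₂:ℂ)) * ((z + (b₁:ℂ))*(z + (b₂:ℂ)))))
      * (((z + (b₁:ℂ))*(z + (b₂:ℂ))) * (((-z) + (b₁:ℂ))*((-z) + (b₂:ℂ)))) = 0 := by
    linear_combination (((-z)^4 + (cA a b₁ b₂:ℂ)*(-z)^3 + (cB a b₁ b₂:ℂ)*(-z)^2
        + (cC a b₁ b₂:ℂ)*(-z) + (cD a b₁ b₂:ℂ)) * (((-z) + (b₁:ℂ))*((-z) + (b₂:ℂ)))) * hii
      - ((z^4 + (cA a b₁ b₂:ℂ)*z^3 + (cB a b₁ b₂:ℂ)*z^2 + (cC a b₁ b₂:ℂ)*z + (cD a b₁ b₂:ℂ))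
        * ((z + (b₁:ℂ))*(z + (b₂:ℂ)))) * hiii
      + ((2*z + (b₁:ℂ) + (b₂:ℂ)) * (((-z) + (b₁:ℂ))*((-z) + (b₂:ℂ)))
          - (2*(-z) + (b₁:ℂ) + (b₂:ℂ)) * ((z + (b₁:ℂ))*(z + (b₂:ℂ)))) * hiQ
  -- Pz*Pw ≠ 0
  have key : ∀ t b : ℝ, 0 < b → (Complex.I * (t:ℂ) + (b:ℂ)) ≠ 0 := by
    intro t b hb h
    have := congrArg Complex.re h
    simp at this
    linarith
  have hnz : (((z + (b₁:ℂ))*(z + (b₂:ℂ))) * (((-z) + (b₁:ℂ))*((-z) + (b₂:ℂ)))) ≠ 0 := by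
    have h1 := key ω₀ b₁ hb₁
    have h2 := key ω₀ b₂ hb₂
    have h3 := key (-ω₀) b₁ hb₁
    have h4 := key (-ω₀) b₂ hb₂
    rw [hzdef]
    push_cast at h3 h4
    apply mul_ne_zero (mul_ne_zero h1 h2)
    apply mul_ne_zero
    · intro h; apply h3; rw [← h]; ring
    · intro h; apply h4; rw [← h]; ring
  have hS0 := (mul_eq_zero.mp hSP).resolve_right hnz
  -- final identity: S = -2 i ω₀ h'(ω₀²)
  have hfin : 2*Complex.I*(ω₀:ℂ)*((hq' a b₁ b₂ c (ω₀^2) : ℝ) : ℂ) = 0 := by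
    rw [hzdef] at hS0
    simp only [hq', qP, qQ, qR, cA, cB, cC, cD, cE] at hS0 ⊢
    push_cast at hS0 ⊢
    linear_combination (-1 : ℂ) * hS0 + ((24:ℂ)*Complex.I*(ω₀:ℂ)^3 - (4:ℂ)*Complex.I*(ω₀:ℂ)^3*(c:ℂ)^4 - (8:ℂ)*Complex.I*(ω₀:ℂ)^3*(b₂:ℂ)^2 - (8:ℂ)*Complex.I*(ω₀:ℂ)^3*(b₁:ℂ)^2 + (4:ℂ)*Complex.I*(ω₀:ℂ)^3*(b₁:ℂ)^2*(b₂:ℂ)^2 - (8:ℂ)*Complex.I*(ω₀:ℂ)^3*(a:ℂ)*(b₂:ℂ) - (8:ℂ)*Complex.I*(ω₀:ℂ)^3*(a:ℂ)*(b₁:ℂ) - (16:ℂ)*Complex.I*(ω₀:ℂ)^3*(a:ℂ)^2 + (8:ℂ)*Complex.I*(ω₀:ℂ)^3*(a:ℂ)^2*(b₂:ℂ)^2 + (8:ℂ)*Complex.I*(ω₀:ℂ)^3*(a:ℂ)^2*(b₁:ℂ)^2 + (4:ℂ)*Complex.I*(ω₀:ℂ)^3*(a:ℂ)^4 - (24:ℂ)*Complex.I*(ω₀:ℂ)^5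 + (6:ℂ)*Complex.I*(ω₀:ℂ)^5*(b₂:ℂ)^2 + (6:ℂ)*Complex.I*(ω₀:ℂ)^5*(b₁:ℂ)^2 + (12:ℂ)*Complex.I*(ω₀:ℂ)^5*(a:ℂ)^2 + (8:ℂ)*Complex.I*(ω₀:ℂ)^7 + (24:ℂ)*Complex.I^3*(ω₀:ℂ)^5 - (6:ℂ)*Complex.I^3*(ω₀:ℂ)^5*(b₂:ℂ)^2 - (6:ℂ)*Complex.I^3*(ω₀:ℂ)^5*(b₁:ℂ)^2 - (12:ℂ)*Complex.I^3*(ω₀:ℂ)^5*(a:ℂ)^2 - (8:ℂ)*Complex.I^3*(ω₀:ℂ)^7 + (8:ℂ)*Complex.I^5*(ω₀:ℂ)^7) * Complex.I_sq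
  have h2nz : (2*Complex.I*(ω₀:ℂ)) ≠ 0 := by
    simp [Complex.I_ne_zero, hω₀.ne', Complex.ext_iff]
  have := (mul_eq_zero.mp hfin).resolve_left h2nz
  rw [Complex.ofReal_eq_zero] at this
  exact hder this
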